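/- Let α > 1, β > −α, 0 < ε ≤ 1, and let h : (0,1] → ℝ be positive, monotone increasing, with h(x) ≤ x^α for all x ∈ (0,1]. Then for every s₀ < 0 there exists a constant C = C(h, α, β, s₀) such that for all s ≤ s₀ and all f ∈ L²(0,ε): ‖x ↦ x^β · ∫_x^ε exp(−s ∫_y^x dt/h(t)) f(y) dy‖_{L²(0,ε)} ≤ (C/|s|) · ε^{α+β} · ‖f‖_{L²(0,ε)}. -/

import Mathlib

open MeasureTheory Set Real
open scoped ENNReal NNReal

lemma aux_pow_le_exp (t : ℝ) (n : ℕ) (ht : 0 ≤ t) : t ^ n ≤ n.factorial * Real.exp t := by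
  have h1 : t ^ n / n.factorial ≤ Real.exp t := by
    calc t ^ n / n.factorial ≤ ∑ i ∈ Finset.range (n+1), t ^ i / i.factorial := by
          refine Finset.single_le_sum (f := fun i => t ^ i / i.factorial) ?_ (Finset.self_mem_range_succ n)
          intro i _
          positivity
      _ ≤ Real.exp t := Real.sum_le_exp_of_nonneg ht _
  have hf : (0:ℝ) < n.factorial := by positivity
  calc t ^ n = (t ^ n / n.factorial) * n.factorial := by field_simp
    _ ≤ Real.exp t * n.factorial := mul_le_mul_of_nonneg_right h1 hf.le
    _ = n.factorial * Real.exp t := by ring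

lemma aux_C3 (α β ε s₀ : ℝ) (hα : 1 < α) (hβ : -α < β) (hε1 : ε ≤ 1) (hs₀ : s₀ < 0) :
    ∃ C₃ ≥ (1:ℝ), ∀ s ≤ s₀, ∀ x y : ℝ, 0 < x → x ≤ y → y ≤ ε →
      x ^ β * Real.exp (s * (x ^ (1-α) - y ^ (1-α)) / (2*(α-1))) ≤ C₃ * y ^ β := by
  have hα1 : (0:ℝ) < α - 1 := by linarith
  set κ : ℝ := (-s₀) / (2*(α-1)) with hκdef
  have hκ : 0 < κ := div_pos (by linarith) (by linarith)
  set q : ℝ := (-β) / (α - 1) with hq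
  set n : ℕ := ⌈q⌉₊ with hn
  have hc : (0:ℝ) < ((n.factorial : ℝ) / κ ^ n) * Real.exp κ := by positivity
  refine ⟨1 + ((n.factorial : ℝ) / κ ^ n) * Real.exp κ, le_add_of_nonneg_right hc.le, ?_⟩
  intro s hs x y hx hxy hyε
  have hy : 0 < y := lt_of_lt_of_le hx hxy
  have hy1 : y ≤ 1 := hyε.trans hε1
  have hΔ : 0 ≤ x ^ (1-α) - y ^ (1-α) := by
    have := Real.rpow_le_rpow_of_nonpos hx hxy (by linarith : 1 - α ≤ 0)
    linarith
  set Δ : ℝ := x ^ (1-α) - y ^ (1-α) with hΔdef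
  have hexp : Real.exp (s * Δ / (2*(α-1))) ≤ Real.exp (-(κ * Δ)) := by
    apply Real.exp_le_exp.2
    have h2 : s * Δ ≤ s₀ * Δ := mul_le_mul_of_nonneg_right hs hΔ
    have h3 : s₀ * Δ / (2*(α-1)) = -(κ * Δ) := by
      rw [hκdef]; field_simp
    rw [← h3]
    exact div_le_div_of_nonneg_right h2 (by linarith) |>.trans_eq rfl
  have hyβ : (0:ℝ) < y ^ β := Real.rpow_pos_of_pos hy β
  have hxβ : (0:ℝ) < x ^ β := Real.rpow_pos_of_pos hx β
  rcases le_or_gt 0 β with hβ0 | hβ0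
  · have h1 : x ^ β ≤ y ^ β := Real.rpow_le_rpow hx.le hxy hβ0
    have h2 : Real.exp (s * Δ / (2*(α-1))) ≤ 1 :=
      hexp.trans (Real.exp_le_one_iff.2 (by nlinarith))
    nlinarith [Real.exp_pos (s * Δ / (2*(α-1)))]
  · set u : ℝ := (x / y) ^ (1-α) with hu
    have hxy' : x / y ≤ 1 := (div_le_one hy).2 hxy
    have hxyp : 0 < x / y := div_pos hx hy
    have hu1 : 1 ≤ u := Real.one_le_rpow_of_pos_of_le_one_of_nonpos hxyp hxy' (by linarith)
    have hq' : (1 - α) * q = β := by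
      rw [hq]; field_simp; ring
    have huq : u ^ q = (x / y) ^ β := by
      rw [hu, ← Real.rpow_mul hxyp.le, hq']
    have hxβeq : x ^ β = u ^ q * y ^ β := by
      rw [huq, Real.div_rpow hx.le hy.le, div_mul_cancel₀ _ hyβ.ne']
    have hudiv : u = x ^ (1-α) / y ^ (1-α) := by
      rw [hu, Real.div_rpow hx.le hy.le]
    have hy1α : (1:ℝ) ≤ y ^ (1-α) :=
      Real.one_le_rpow_of_pos_of_le_one_of_nonpos hy hy1 (by linarith)
    have hΔu : u - 1 ≤ Δ := by
      have hypos : (0:ℝ) < y ^ (1-α) := by linarith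
      have hxeq : x ^ (1-α) = y ^ (1-α) * u := by
        rw [hudiv]; field_simp
      have hΔeq : Δ = y ^ (1-α) * (u - 1) := by rw [hΔdef, hxeq]; ring
      nlinarith
    have hkey : u ^ q * Real.exp (-(κ * Δ)) ≤ ((n.factorial : ℝ) / κ ^ n) * Real.exp κ := by
      have h1 : u ^ q ≤ u ^ (n:ℝ) :=
        Real.rpow_le_rpow_of_exponent_le hu1 (Nat.le_ceil q)
      have h2 : u ^ (n:ℝ) = u ^ n := Real.rpow_natCast u n
      have h3 : u ^ n ≤ (n.factorial : ℝ) * Real.exp (κ * u) / κ ^ n := by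
        have haux := aux_pow_le_exp (κ * u) n (by positivity)
        rw [mul_pow] at haux
        rw [le_div_iff₀ (by positivity : (0:ℝ) < κ ^ n), mul_comm (u ^ n) (κ ^ n)]
        exact haux
      have h4 : Real.exp (-(κ * Δ)) ≤ Real.exp κ * Real.exp (-(κ * u)) := by
        rw [← Real.exp_add]
        apply Real.exp_le_exp.2
        linarith [mul_le_mul_of_nonneg_left hΔu hκ.le]
      have e1 : u ^ q * Real.exp (-(κ * Δ)) ≤
          ((n.factorial : ℝ) * Real.exp (κ * u) / κ ^ n) * (Real.exp κ * Real.exp (-(κ * u))) := by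
        apply mul_le_mul (h1.trans (h2.le.trans h3)) h4 (Real.exp_pos _).le (by positivity)
      refine e1.trans_eq ?_
      have : Real.exp (κ * u) * Real.exp (-(κ * u)) = 1 := by
        rw [← Real.exp_add, add_neg_cancel, Real.exp_zero]
      calc ((n.factorial : ℝ) * Real.exp (κ * u) / κ ^ n) * (Real.exp κ * Real.exp (-(κ * u)))
          = ((n.factorial : ℝ) / κ ^ n) * Real.exp κ * (Real.exp (κ * u) * Real.exp (-(κ * u))) := by
            ring
        _ = ((n.factorial : ℝ) / κ ^ n) * Real.exp κ := by rw [this, mul_one]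
    calc x ^ β * Real.exp (s * Δ / (2*(α-1)))
        ≤ x ^ β * Real.exp (-(κ * Δ)) := mul_le_mul_of_nonneg_left hexp hxβ.le
      _ = (u ^ q * Real.exp (-(κ * Δ))) * y ^ β := by rw [hxβeq]; ring
      _ ≤ (((n.factorial : ℝ) / κ ^ n) * Real.exp κ) * y ^ β :=
          mul_le_mul_of_nonneg_right hkey hyβ.le
      _ ≤ (1 + ((n.factorial : ℝ) / κ ^ n) * Real.exp κ) * y ^ β := by linarith [hyβ.le]

lemma aux_row (α β ε s x : ℝ) (hα : 1 < α) (hαβ : 0 < α + β) (hs : s < 0)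
    (hx : 0 < x) (hxε : x < ε) :
    ∫⁻ y in Ioo x ε, ENNReal.ofReal
        (Real.exp (s * (x ^ (1-α) - y ^ (1-α)) / (α-1)) * y ^ β) ≤
      ENNReal.ofReal (ε ^ (α+β) / (-s)) := by
  have hα1 : (0:ℝ) < α - 1 := by linarith
  have hsne : s ≠ 0 := ne_of_lt hs
  have hε : 0 < ε := hx.trans hxε
  set Φ : ℝ → ℝ := fun y => Real.exp (s * (x ^ (1-α) - y ^ (1-α)) / (α-1)) with hΦ
  set G : ℝ → ℝ := fun y => ε ^ (α+β) * (y ^ (-α) * Φ y) with hG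
  have hΦderiv : ∀ t : ℝ, 0 < t → HasDerivAt Φ (s * t ^ (-α) * Φ t) t := by
    intro t ht
    have h1 : HasDerivAt (fun y : ℝ => y ^ (1-α)) ((1-α) * t ^ ((1-α)-1)) t :=
      Real.hasDerivAt_rpow_const (Or.inl ht.ne')
    have h2 : HasDerivAt (fun y : ℝ => s * (x ^ (1-α) - y ^ (1-α)) / (α-1))
        (s * (0 - (1-α) * t ^ ((1-α)-1)) / (α-1)) t :=
      (((hasDerivAt_const t (x ^ (1-α))).sub h1).const_mul s).div_const (α-1)
    have h3 := h2.exp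
    have he : (1-α)-1 = -α := by ring
    rw [he] at h3
    convert h3 using 1
    rw [hΦ]
    field_simp
    ring
  have hΦpos : ∀ t : ℝ, 0 < Φ t := fun t => Real.exp_pos _
  have hΦx : Φ x = 1 := by
    rw [hΦ]; simp
  -- pointwise bound on Ioo x ε
  have hpt : ∀ y ∈ Ioo x ε, Φ y * y ^ β ≤ G y := by
    intro y hy
    have hy0 : 0 < y := hx.trans hy.1
    have hsplit : y ^ β = y ^ (α+β) * y ^ (-α) := by
      rw [← Real.rpow_add hy0]
      congr 1; ring
    have h1 : y ^ (α+β) ≤ ε ^ (α+β) := Real.rpow_le_rpow hy0.le hy.2.le hαβ.le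
    have h2 : 0 ≤ y ^ (-α) * Φ y := by positivity
    calc Φ y * y ^ β = y ^ (α+β) * (y ^ (-α) * Φ y) := by rw [hsplit]; ring
      _ ≤ ε ^ (α+β) * (y ^ (-α) * Φ y) := mul_le_mul_of_nonneg_right h1 h2
      _ = G y := rfl
  -- continuity of G on Icc x ε
  have hGcont : ContinuousOn G (Icc x ε) := by
    have c1 : ContinuousOn (fun y : ℝ => y ^ (-α)) (Icc x ε) := fun y hy =>
      (Real.continuousAt_rpow_const y (-α) (Or.inl (hx.trans_le hy.1).ne')).continuousWithinAt
    have c2 : ContinuousOn (fun y : ℝ => y ^ (1-α)) (Icc x ε) := fun y hy =>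
      (Real.continuousAt_rpow_const y (1-α) (Or.inl (hx.trans_le hy.1).ne')).continuousWithinAt
    have cΦ : ContinuousOn Φ (Icc x ε) :=
      Real.continuous_exp.comp_continuousOn
        (((continuousOn_const.sub c2).const_smul s).div_const (α-1))
    exact (continuousOn_const.mul (c1.mul cΦ))
  have hGint : IntegrableOn G (Ioo x ε) := by
    exact (hGcont.integrableOn_compact isCompact_Icc).mono_set Ioo_subset_Icc_self
  have hGnn : 0 ≤ᵐ[volume.restrict (Ioo x ε)] G := by
    refine (ae_restrict_iff' measurableSet_Ioo).2 (Filter.Eventually.of_forall ?_)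
    intro y hy
    have hy0 : 0 < y := hx.trans hy.1
    have := hΦpos y
    positivity
  -- value of ∫ G
  have hFTC : ∫ y in Ioo x ε, G y = (ε ^ (α+β) / s) * Φ ε - (ε ^ (α+β) / s) * Φ x := by
    rw [← integral_Ioc_eq_integral_Ioo, ← intervalIntegral.integral_of_le hxε.le]
    apply intervalIntegral.integral_eq_sub_of_hasDerivAt (f := fun y => ε ^ (α+β) / s * Φ y)
    · intro t ht
      rw [uIcc_of_le hxε.le] at ht
      have ht0 : 0 < t := hx.trans_le ht.1
      have := (hΦderiv t ht0).const_mul (ε ^ (α+β) / s)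
      refine this.congr_deriv ?_
      show _ = ε ^ (α+β) * (t ^ (-α) * Φ t)
      rw [div_mul_eq_mul_div, div_eq_iff hsne]
      ring
    · exact (hGcont.mono (by rw [uIcc_of_le hxε.le])).intervalIntegrable
  have hval : ∫ y in Ioo x ε, G y ≤ ε ^ (α+β) / (-s) := by
    rw [hFTC, hΦx]
    have hεp : 0 < ε ^ (α+β) := Real.rpow_pos_of_pos hε _
    have hΦε : 0 < Φ ε := hΦpos ε
    have hΦε1 : Φ ε ≤ 1 := by
      rw [hΦ]
      apply Real.exp_le_one_iff.2
      have hΔ : 0 ≤ x ^ (1-α) - ε ^ (1-α) := by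
        have := Real.rpow_le_rpow_of_nonpos hx hxε.le (by linarith : 1 - α ≤ 0)
        linarith
      have : s * (x ^ (1-α) - ε ^ (1-α)) ≤ 0 := mul_nonpos_of_nonpos_of_nonneg hs.le hΔ
      exact div_nonpos_of_nonpos_of_nonneg this hα1.le
    have hns : (0:ℝ) < -s := by linarith
    have heq : ε ^ (α+β) / s * Φ ε - ε ^ (α+β) / s * 1 = ε ^ (α+β) * (1 - Φ ε) / (-s) := by
      field_simp
      ring
    rw [heq]
    have h1 : ε ^ (α+β) * (1 - Φ ε) ≤ ε ^ (α+β) := by nlinarith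
    exact div_le_div_of_nonneg_right h1 hns.le
  calc ∫⁻ y in Ioo x ε, ENNReal.ofReal (Φ y * y ^ β)
      ≤ ∫⁻ y in Ioo x ε, ENNReal.ofReal (G y) := by
        apply lintegral_mono_ae
        refine (ae_restrict_iff' measurableSet_Ioo).2 (Filter.Eventually.of_forall ?_)
        intro y hy
        exact ENNReal.ofReal_le_ofReal (hpt y hy)
    _ = ENNReal.ofReal (∫ y in Ioo x ε, G y) :=
        (MeasureTheory.ofReal_integral_eq_lintegral_ofReal hGint hGnn).symm
    _ ≤ ENNReal.ofReal (ε ^ (α+β) / (-s)) := ENNReal.ofReal_le_ofReal hval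

lemma aux_col (α β ε s₀ C₃ s y : ℝ) (hα : 1 < α) (hαβ : 0 < α + β) (hε1 : ε ≤ 1)
    (hs₀ : s₀ < 0) (hC₃ : 1 ≤ C₃)
    (hC3 : ∀ s' ≤ s₀, ∀ x z : ℝ, 0 < x → x ≤ z → z ≤ ε →
      x ^ β * Real.exp (s' * (x ^ (1-α) - z ^ (1-α)) / (2*(α-1))) ≤ C₃ * z ^ β)
    (hs : s ≤ s₀) (hy : 0 < y) (hyε : y < ε) :
    ∫⁻ x in Ioo 0 y, ENNReal.ofReal
        (x ^ (2*β) * Real.exp (s * (x ^ (1-α) - y ^ (1-α)) / (α-1))) ≤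
      ENNReal.ofReal ((2*C₃*ε^(α+β)/(-s)) * y ^ β) := by
  have hα1 : (0:ℝ) < α - 1 := by linarith
  have hs' : s < 0 := lt_of_le_of_lt hs hs₀
  have hsne : s ≠ 0 := hs'.ne
  have hns : (0:ℝ) < -s := by linarith
  have hε : 0 < ε := hy.trans hyε
  have hyβ : (0:ℝ) < y ^ β := Real.rpow_pos_of_pos hy β
  have hεαβ : (0:ℝ) < ε ^ (α+β) := Real.rpow_pos_of_pos hε _
  set Ψ : ℝ → ℝ := fun x => Real.exp (s * (x ^ (1-α) - y ^ (1-α)) / (2*(α-1))) with hΨ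
  set M : ℝ := 2*C₃*ε^(α+β)/(-s) * y ^ β with hM
  have hMpos : 0 < M := by
    apply mul_pos _ hyβ
    apply div_pos _ hns
    positivity
  set φ : ℝ → ℝ := fun x => M * (((-s)/2) * x ^ (-α) * Ψ x) with hφ
  have hΨpos : ∀ t : ℝ, 0 < Ψ t := fun t => Real.exp_pos _
  have hΨy : Ψ y = 1 := by rw [hΨ]; simp
  have hΨderiv : ∀ t : ℝ, 0 < t → HasDerivAt Ψ (((-s)/2) * t ^ (-α) * Ψ t) t := by
    intro t ht
    have h1 : HasDerivAt (fun u : ℝ => u ^ (1-α)) ((1-α) * t ^ ((1-α)-1)) t :=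
      Real.hasDerivAt_rpow_const (Or.inl ht.ne')
    have h2 : HasDerivAt (fun u : ℝ => s * (u ^ (1-α) - y ^ (1-α)) / (2*(α-1)))
        (s * ((1-α) * t ^ ((1-α)-1) - 0) / (2*(α-1))) t :=
      ((h1.sub (hasDerivAt_const t (y ^ (1-α)))).const_mul s).div_const (2*(α-1))
    have h3 := h2.exp
    have he : (1-α)-1 = -α := by ring
    rw [he] at h3
    convert h3 using 1
    rw [hΨ]
    field_simp
    ring
  -- pointwise bound on Ioo 0 y
  have hpt : ∀ x ∈ Ioo (0:ℝ) y,
      x ^ (2*β) * Real.exp (s * (x ^ (1-α) - y ^ (1-α)) / (α-1)) ≤ φ x := by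
    intro x hx
    have hx0 : 0 < x := hx.1
    have hxβ : (0:ℝ) < x ^ β := Real.rpow_pos_of_pos hx0 β
    have hxmα : (0:ℝ) < x ^ (-α) := Real.rpow_pos_of_pos hx0 _
    have hsq : Real.exp (s * (x ^ (1-α) - y ^ (1-α)) / (α-1)) = Ψ x * Ψ x := by
      rw [hΨ, ← Real.exp_add]
      congr 1
      field_simp
      ring
    have h2β : x ^ (2*β) = x ^ β * x ^ β := by
      rw [← Real.rpow_add hx0]; congr 1; ring
    have hb1 : x ^ β * Ψ x ≤ C₃ * y ^ β :=
      hC3 s hs x y hx0 hx.2.le (hyε.le.trans (le_refl ε)) |>.trans_eq rfl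
    have hb2 : x ^ β * Ψ x ≤ ε ^ (α+β) * (x ^ (-α) * Ψ x) := by
      have hsplit : x ^ β = x ^ (α+β) * x ^ (-α) := by
        rw [← Real.rpow_add hx0]; congr 1; ring
      have h1 : x ^ (α+β) ≤ ε ^ (α+β) :=
        Real.rpow_le_rpow hx0.le (hx.2.le.trans hyε.le) hαβ.le
      calc x ^ β * Ψ x = x ^ (α+β) * (x ^ (-α) * Ψ x) := by rw [hsplit]; ring
        _ ≤ ε ^ (α+β) * (x ^ (-α) * Ψ x) := by
            apply mul_le_mul_of_nonneg_right h1
            positivity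
    have hnn1 : (0:ℝ) ≤ x ^ β * Ψ x := by positivity
    have hnn2 : (0:ℝ) ≤ C₃ * y ^ β := by positivity
    calc x ^ (2*β) * Real.exp (s * (x ^ (1-α) - y ^ (1-α)) / (α-1))
        = (x ^ β * Ψ x) * (x ^ β * Ψ x) := by rw [hsq, h2β]; ring
      _ ≤ (C₃ * y ^ β) * (ε ^ (α+β) * (x ^ (-α) * Ψ x)) :=
          mul_le_mul hb1 hb2 hnn1 hnn2
      _ = φ x := by
          rw [hφ, hM]
          field_simp
  -- bound on proper subintervals
  have hsub : ∀ δ : ℝ, 0 < δ → δ < y → ∫⁻ x in Ioo δ y, ENNReal.ofReal (φ x) ≤ ENNReal.ofReal M := by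
    intro δ hδ hδy
    have hφcont : ContinuousOn φ (Icc δ y) := by
      have c1 : ContinuousOn (fun x : ℝ => x ^ (-α)) (Icc δ y) := fun x hx =>
        (Real.continuousAt_rpow_const x (-α) (Or.inl (hδ.trans_le hx.1).ne')).continuousWithinAt
      have c2 : ContinuousOn (fun x : ℝ => x ^ (1-α)) (Icc δ y) := fun x hx =>
        (Real.continuousAt_rpow_const x (1-α) (Or.inl (hδ.trans_le hx.1).ne')).continuousWithinAt
      have cΨ : ContinuousOn Ψ (Icc δ y) :=
        Real.continuous_exp.comp_continuousOn
          (((c2.sub continuousOn_const).const_smul s).div_const (2*(α-1)))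
      exact continuousOn_const.mul ((c1.const_smul ((-s)/2)).mul cΨ)
    have hφint : IntegrableOn φ (Ioo δ y) :=
      (hφcont.integrableOn_compact isCompact_Icc).mono_set Ioo_subset_Icc_self
    have hφnn : 0 ≤ᵐ[volume.restrict (Ioo δ y)] φ := by
      refine (ae_restrict_iff' measurableSet_Ioo).2 (Filter.Eventually.of_forall ?_)
      intro x hx
      have hx0 : 0 < x := hδ.trans hx.1
      have := hΨpos x
      have hxmα : (0:ℝ) < x ^ (-α) := Real.rpow_pos_of_pos hx0 _
      rw [hφ]
      positivity
    rw [← MeasureTheory.ofReal_integral_eq_lintegral_ofReal hφint hφnn]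
    apply ENNReal.ofReal_le_ofReal
    have hFTC : ∫ x in Ioo δ y, φ x = M * Ψ y - M * Ψ δ := by
      rw [← integral_Ioc_eq_integral_Ioo, ← intervalIntegral.integral_of_le hδy.le]
      apply intervalIntegral.integral_eq_sub_of_hasDerivAt (f := fun x => M * Ψ x)
      · intro t ht
        rw [uIcc_of_le hδy.le] at ht
        have ht0 : 0 < t := hδ.trans_le ht.1
        have := (hΨderiv t ht0).const_mul M
        convert this using 1
      · exact (hφcont.mono (by rw [uIcc_of_le hδy.le])).intervalIntegrable
    rw [hFTC, hΨy]
    have := (hΨpos δ).le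
    nlinarith
  -- sup over shrinking intervals
  have hmeasφ : Measurable fun x => ENNReal.ofReal (φ x) := by
    apply ENNReal.measurable_ofReal.comp
    apply Measurable.mul measurable_const
    apply Measurable.mul (Measurable.mul measurable_const
      (Measurable.pow measurable_id measurable_const))
    apply Real.measurable_exp.comp
    apply Measurable.div_const
    apply Measurable.const_mul
    exact (Measurable.pow measurable_id measurable_const).sub measurable_const
  have key : ∫⁻ x in Ioo 0 y, ENNReal.ofReal (φ x) ≤ ENNReal.ofReal M := by
    have hrw : ∫⁻ x in Ioo 0 y, ENNReal.ofReal (φ x) =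
        ∫⁻ x, ⨆ n : ℕ, (Ioo (y/(n+2)) y).indicator (fun t => ENNReal.ofReal (φ t)) x := by
      rw [← lintegral_indicator measurableSet_Ioo]
      congr 1
      funext x
      rcases em (x ∈ Ioo (0:ℝ) y) with hx | hx
      · rw [Set.indicator_of_mem hx]
        apply le_antisymm
        · obtain ⟨n, hn⟩ := exists_nat_gt (y / x)
          have hx0 : 0 < x := hx.1
          have h1 : y / (n+2) < x := by
            rw [div_lt_iff₀ (by positivity)]
            rw [div_lt_iff₀ hx0] at hn
            nlinarith
          refine le_iSup_of_le n ?_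
          rw [Set.indicator_of_mem (show x ∈ Ioo (y/(n+2)) y from ⟨h1, hx.2⟩)]
        · apply iSup_le
          intro n
          rcases em (x ∈ Ioo (y/(n+2)) y) with h | h
          · rw [Set.indicator_of_mem h]
          · rw [Set.indicator_of_notMem h]; exact zero_le
      · rw [Set.indicator_of_notMem hx]
        symm
        rw [ENNReal.iSup_eq_zero]
        intro n
        apply Set.indicator_of_notMem
        intro hmem
        exact hx ⟨lt_of_le_of_lt (by positivity) hmem.1, hmem.2⟩
    rw [hrw, lintegral_iSup]
    · apply iSup_le
      intro n
      rw [lintegral_indicator measurableSet_Ioo]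
      rcases lt_or_ge (y/(n+2)) y with hlt | hle
      · exact hsub _ (by positivity) hlt
      · rw [Ioo_eq_empty (by exact not_lt.2 hle)]
        simp
    · intro n; exact hmeasφ.indicator measurableSet_Ioo
    · intro m n hmn
      apply Set.indicator_le_indicator_of_subset
      · apply Ioo_subset_Ioo_left
        have hc : ((m:ℝ)) ≤ n := Nat.cast_le.2 hmn
        gcongr
        all_goals linarith
      · intro x; exact zero_le
  calc ∫⁻ x in Ioo 0 y, ENNReal.ofReal
        (x ^ (2*β) * Real.exp (s * (x ^ (1-α) - y ^ (1-α)) / (α-1)))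
      ≤ ∫⁻ x in Ioo 0 y, ENNReal.ofReal (φ x) := by
        apply lintegral_mono_ae
        refine (ae_restrict_iff' measurableSet_Ioo).2 (Filter.Eventually.of_forall ?_)
        intro x hx
        exact ENNReal.ofReal_le_ofReal (hpt x hx)
    _ ≤ ENNReal.ofReal M := key

lemma aux_kernel (α ε s : ℝ) (h : ℝ → ℝ) (hα : 1 < α) (hε1 : ε ≤ 1) (hs : s < 0)
    (hpos : ∀ x ∈ Ioc (0:ℝ) 1, 0 < h x)
    (hmono : ∀ x ∈ Ioc (0:ℝ) 1, ∀ y ∈ Ioc (0:ℝ) 1, x ≤ y → h x ≤ h y)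
    (hbound : ∀ x ∈ Ioc (0:ℝ) 1, h x ≤ x ^ α)
    (x y : ℝ) (hx : 0 < x) (hxy : x ≤ y) (hyε : y < ε) :
    Real.exp (-(s * ∫ t in y..x, 1 / h t)) ≤
      Real.exp (s * (x ^ (1-α) - y ^ (1-α)) / (α-1)) := by
  have hα1 : (0:ℝ) < α - 1 := by linarith
  have hy1 : y ≤ 1 := by linarith
  have hIcc : ∀ t ∈ Icc x y, t ∈ Ioc (0:ℝ) 1 := fun t ht => ⟨hx.trans_le ht.1, ht.2.trans hy1⟩
  have hsymm : (∫ t in y..x, 1 / h t) = -∫ t in x..y, 1 / h t :=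
    intervalIntegral.integral_symm x y
  have hu : uIcc x y = Icc x y := uIcc_of_le hxy
  have II1 : IntervalIntegrable (fun t => 1 / h t) volume x y := by
    apply AntitoneOn.intervalIntegrable
    rw [hu]
    intro a ha b hb hab
    have ha' := hIcc a ha
    have hb' := hIcc b hb
    exact one_div_le_one_div_of_le (hpos a ha') (hmono a ha' b hb' hab)
  have II2 : IntervalIntegrable (fun t : ℝ => t ^ (-α)) volume x y := by
    apply ContinuousOn.intervalIntegrable
    rw [hu]
    intro t ht
    exact (Real.continuousAt_rpow_const t (-α)
      (Or.inl (hx.trans_le ht.1).ne')).continuousWithinAt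
  have hle : (∫ t in x..y, t ^ (-α)) ≤ ∫ t in x..y, 1 / h t := by
    apply intervalIntegral.integral_mono_on hxy II2 II1
    intro t ht
    have ht' := hIcc t ht
    have ht0 : 0 < t := ht'.1
    have htα : 0 < t ^ α := Real.rpow_pos_of_pos ht0 α
    rw [Real.rpow_neg ht0.le, ← one_div]
    exact one_div_le_one_div_of_le (hpos t ht') (hbound t ht')
  have hval : (∫ t in x..y, t ^ (-α)) = (x ^ (1-α) - y ^ (1-α)) / (α-1) := by
    rw [integral_rpow (Or.inr ⟨by intro hc; exact absurd (neg_injective hc) (by linarith), by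
      rw [hu]; exact fun hc => absurd hc.1 (not_le.2 hx)⟩)]
    have e1 : -α + 1 = 1 - α := by ring
    rw [e1]
    have hne : (1:ℝ) - α ≠ 0 := by intro hc; linarith
    field_simp
    ring
  apply Real.exp_le_exp.2
  rw [hsymm]
  have h1 : (x ^ (1-α) - y ^ (1-α)) / (α-1) ≤ ∫ t in x..y, 1 / h t := hval ▸ hle
  calc -(s * -∫ t in x..y, 1 / h t) = s * ∫ t in x..y, 1 / h t := by ring
    _ ≤ s * ((x ^ (1-α) - y ^ (1-α)) / (α-1)) := mul_le_mul_of_nonpos_left h1 hs.le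
    _ = s * (x ^ (1-α) - y ^ (1-α)) / (α-1) := by ring

/-- Lemma 3.2, case `s ≤ s₀ < 0`: `‖X^β P_{1,s}^{1/h} f‖ ≤ (C/|s|) ε^{α+β} ‖f‖` in `L²(0,ε)`. -/
theorem stmt_9 (α β ε : ℝ) (hα : 1 < α) (hβ : -α < β) (hε : 0 < ε) (hε1 : ε ≤ 1)
    (h : ℝ → ℝ)
    (hpos : ∀ x ∈ Ioc (0:ℝ) 1, 0 < h x)
    (hmono : ∀ x ∈ Ioc (0:ℝ) 1, ∀ y ∈ Ioc (0:ℝ) 1, x ≤ y → h x ≤ h y)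
    (hbound : ∀ x ∈ Ioc (0:ℝ) 1, h x ≤ x ^ α)
    (s₀ : ℝ) (hs₀ : s₀ < 0) :
    ∃ C > (0:ℝ), ∀ s ≤ s₀, ∀ f : ℝ → ℝ,
      MemLp f 2 (volume.restrict (Ioo (0:ℝ) ε)) →
      eLpNorm (fun x => x ^ β * ∫ y in Ioo x ε,
          Real.exp (-(s * ∫ t in y..x, 1 / h t)) * f y)
        2 (volume.restrict (Ioo (0:ℝ) ε)) ≤
        ENNReal.ofReal (C / |s| * ε ^ (α + β)) *
          eLpNorm f 2 (volume.restrict (Ioo (0:ℝ) ε)) := by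
  have hαβ : 0 < α + β := by linarith
  obtain ⟨C₃, hC₃1, hC3⟩ := aux_C3 α β ε s₀ hα hβ hε1 hs₀
  have hC₃0 : (0:ℝ) < 2 * C₃ := by linarith
  refine ⟨Real.sqrt (2*C₃), Real.sqrt_pos.2 hC₃0, ?_⟩
  intro s hs f hf
  have hs' : s < 0 := lt_of_le_of_lt hs hs₀
  have hsne : s ≠ 0 := hs'.ne
  have hns : (0:ℝ) < -s := by linarith
  have habs : |s| = -s := abs_of_neg hs'
  set μ := volume.restrict (Ioo (0:ℝ) ε) with hμ
  -- measurable representative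
  set g : ℝ → ℝ := hf.1.mk f with hgdef
  have hg_meas : StronglyMeasurable g := hf.1.stronglyMeasurable_mk
  have hgm : Measurable g := hg_meas.measurable
  have hfg : f =ᵐ[μ] g := hf.1.ae_eq_mk
  -- replace f by g on both sides
  have hTfg : (fun x => x ^ β * ∫ y in Ioo x ε,
        Real.exp (-(s * ∫ t in y..x, 1 / h t)) * f y) =ᵐ[μ]
      (fun x => x ^ β * ∫ y in Ioo x ε,
        Real.exp (-(s * ∫ t in y..x, 1 / h t)) * g y) := by
    refine (ae_restrict_iff' measurableSet_Ioo).2 (Filter.Eventually.of_forall ?_)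
    intro x hx
    dsimp only
    congr 1
    apply integral_congr_ae
    have hsub : Ioo x ε ⊆ Ioo (0:ℝ) ε := Ioo_subset_Ioo_left hx.1.le
    have := ae_restrict_of_ae_restrict_of_subset hsub hfg
    exact this.mono fun y hy => by dsimp only; rw [hy]
  rw [eLpNorm_congr_ae hTfg, eLpNorm_congr_ae hfg]
  -- notation
  set D : ℝ → ℝ → ℝ := fun x y => Real.exp (s * (x ^ (1-α) - y ^ (1-α)) / (α-1)) with hD
  set De : ℝ → ℝ → ℝ≥0∞ := fun x y => ENNReal.ofReal (D x y) with hDe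
  set w : ℝ → ℝ≥0∞ := fun y => ENNReal.ofReal (y ^ β) with hw
  set q : ℝ → ℝ≥0∞ := fun y => (‖g y‖₊ : ℝ≥0∞) ^ (2:ℝ) with hq
  set T : ℝ → ℝ := fun x => x ^ β * ∫ y in Ioo x ε,
        Real.exp (-(s * ∫ t in y..x, 1 / h t)) * g y with hT
  set Ae : ℝ≥0∞ := ENNReal.ofReal (ε ^ (α+β) / (-s)) with hAe
  set Be : ℝ≥0∞ := ENNReal.ofReal (2*C₃*ε^(α+β)/(-s)) with hBe
  set Sfun : ℝ → ℝ≥0∞ := fun x => ∫⁻ y in Ioo x ε, De x y * (w y)⁻¹ * q y with hSfun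
  set L : ℝ≥0∞ := ∫⁻ y in Ioo (0:ℝ) ε, q y with hL
  -- Step 1+2+3 : pointwise bound
  have hDemeas : ∀ x : ℝ, Measurable (fun y => De x y) := by
    intro x
    apply ENNReal.measurable_ofReal.comp
    apply Real.measurable_exp.comp
    apply Measurable.div_const
    apply Measurable.const_mul
    exact (measurable_const.sub (measurable_id.pow measurable_const))
  have hwmeas : Measurable w := ENNReal.measurable_ofReal.comp
    (measurable_id.pow measurable_const)
  have hpoint : ∀ x ∈ Ioo (0:ℝ) ε,
      (‖T x‖₊ : ℝ≥0∞) ^ (2:ℝ) ≤ (ENNReal.ofReal (x ^ (2*β)) * Ae) * Sfun x := by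
    intro x hx
    have hx0 : 0 < x := hx.1
    have hxβ : 0 < x ^ β := Real.rpow_pos_of_pos hx0 β
    -- step 1
    have step1 : (‖T x‖₊ : ℝ≥0∞) ≤ ENNReal.ofReal (x ^ β) *
        ∫⁻ y in Ioo x ε, De x y * (‖g y‖₊ : ℝ≥0∞) := by
      have e1 : (‖T x‖₊ : ℝ≥0∞) = ENNReal.ofReal (x ^ β) *
          (‖∫ y in Ioo x ε, Real.exp (-(s * ∫ t in y..x, 1 / h t)) * g y‖₊ : ℝ≥0∞) := by
        rw [hT]
        simp only []
        rw [nnnorm_mul, ENNReal.coe_mul]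
        congr 1
        exact Real.enorm_eq_ofReal hxβ.le
      rw [e1]
      apply mul_le_mul_right ?_ _
      calc (‖∫ y in Ioo x ε, Real.exp (-(s * ∫ t in y..x, 1 / h t)) * g y‖₊ : ℝ≥0∞)
          ≤ ∫⁻ y in Ioo x ε, ‖Real.exp (-(s * ∫ t in y..x, 1 / h t)) * g y‖₊ :=
            enorm_integral_le_lintegral_enorm _
        _ ≤ ∫⁻ y in Ioo x ε, De x y * (‖g y‖₊ : ℝ≥0∞) := by
            apply lintegral_mono_ae
            refine (ae_restrict_iff' measurableSet_Ioo).2 (Filter.Eventually.of_forall ?_)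
            intro y hy
            rw [nnnorm_mul, ENNReal.coe_mul]
            apply mul_le_mul_left ?_ _
            refine (Real.enorm_eq_ofReal (Real.exp_pos _).le).trans_le ?_
            apply ENNReal.ofReal_le_ofReal
            exact aux_kernel α ε s h hα hε1 hs' hpos hmono hbound x y hx0 hy.1.le hy.2
    -- step 2 (Cauchy-Schwarz)
    have step2 : ∫⁻ y in Ioo x ε, De x y * (‖g y‖₊ : ℝ≥0∞) ≤
        (∫⁻ y in Ioo x ε, De x y * w y) ^ (1/2:ℝ) * (Sfun x) ^ (1/2:ℝ) := by
      set u : ℝ → ℝ≥0∞ := fun y => (De x y * w y) ^ (1/2:ℝ) with hu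
      set v : ℝ → ℝ≥0∞ := fun y => (De x y * (w y)⁻¹ * q y) ^ (1/2:ℝ) with hv
      have hum : AEMeasurable u (volume.restrict (Ioo x ε)) :=
        (((hDemeas x).mul hwmeas).pow measurable_const).aemeasurable
      have hvm : AEMeasurable v (volume.restrict (Ioo x ε)) := by
        apply Measurable.aemeasurable
        apply Measurable.pow _ measurable_const
        exact ((hDemeas x).mul hwmeas.inv).mul (hgm.enorm.pow measurable_const)
      have hconj : Real.HolderConjugate 2 2 := Real.HolderConjugate.two_two
      have hCS := ENNReal.lintegral_mul_le_Lp_mul_Lq (volume.restrict (Ioo x ε)) hconj hum hvm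
      have heq : ∀ y ∈ Ioo x ε, De x y * (‖g y‖₊ : ℝ≥0∞) = u y * v y := by
        intro y hy
        have hy0 : 0 < y := hx0.trans hy.1
        have hw0 : w y ≠ 0 := by
          rw [hw]
          simp only [ne_eq, ENNReal.ofReal_eq_zero, not_le]
          exact Real.rpow_pos_of_pos hy0 β
        have hwt : w y ≠ ⊤ := ENNReal.ofReal_ne_top
        rw [hu, hv, ← ENNReal.mul_rpow_of_nonneg _ _ (by norm_num : (0:ℝ) ≤ 1/2)]
        have hDe2 : De x y ^ (2:ℝ) = De x y * De x y := by
          rw [show ((2:ℝ)) = ((2:ℕ):ℝ) by norm_num, ENNReal.rpow_natCast, sq]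
        have key : De x y * w y * (De x y * (w y)⁻¹ * q y) =
            (De x y * (‖g y‖₊ : ℝ≥0∞)) ^ (2:ℝ) := by
          rw [ENNReal.mul_rpow_of_nonneg _ _ (by norm_num : (0:ℝ) ≤ 2), hDe2]
          calc De x y * w y * (De x y * (w y)⁻¹ * q y)
              = (w y * (w y)⁻¹) * (De x y * De x y * q y) := by ring
            _ = De x y * De x y * q y := by rw [ENNReal.mul_inv_cancel hw0 hwt, one_mul]
            _ = De x y * De x y * (‖g y‖₊ : ℝ≥0∞) ^ (2:ℝ) := rfl
        rw [key, ← ENNReal.rpow_mul]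
        norm_num
      calc ∫⁻ y in Ioo x ε, De x y * (‖g y‖₊ : ℝ≥0∞)
          = ∫⁻ y in Ioo x ε, u y * v y := by
            apply setLIntegral_congr_fun measurableSet_Ioo
            exact heq
        _ ≤ (∫⁻ y in Ioo x ε, u y ^ (2:ℝ)) ^ (1/2:ℝ) *
            (∫⁻ y in Ioo x ε, v y ^ (2:ℝ)) ^ (1/2:ℝ) := hCS
        _ = (∫⁻ y in Ioo x ε, De x y * w y) ^ (1/2:ℝ) * (Sfun x) ^ (1/2:ℝ) := by
            congr 1
            · congr 1
              apply lintegral_congr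
              intro y
              rw [hu, ← ENNReal.rpow_mul]
              norm_num
            · rw [hSfun]
              congr 1
              apply lintegral_congr
              intro y
              rw [hv, ← ENNReal.rpow_mul]
              norm_num
    -- step 3 (row bound)
    have step3 : ∫⁻ y in Ioo x ε, De x y * w y ≤ Ae := by
      rw [hAe]
      have : ∀ y : ℝ, De x y * w y = ENNReal.ofReal (D x y * y ^ β) := by
        intro y
        rw [hDe, hw, ENNReal.ofReal_mul (Real.exp_pos _).le]
      calc ∫⁻ y in Ioo x ε, De x y * w y
          = ∫⁻ y in Ioo x ε, ENNReal.ofReal (D x y * y ^ β) := by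
            apply lintegral_congr; intro y; exact this y
        _ ≤ ENNReal.ofReal (ε ^ (α+β) / (-s)) :=
            aux_row α β ε s x hα hαβ hs' hx0 hx.2
    -- combine
    have comb : (‖T x‖₊ : ℝ≥0∞) ≤ ENNReal.ofReal (x ^ β) *
        ((∫⁻ y in Ioo x ε, De x y * w y) ^ (1/2:ℝ) * (Sfun x) ^ (1/2:ℝ)) :=
      step1.trans (mul_le_mul_right step2 _)
    calc (‖T x‖₊ : ℝ≥0∞) ^ (2:ℝ)
        ≤ (ENNReal.ofReal (x ^ β) *
            ((∫⁻ y in Ioo x ε, De x y * w y) ^ (1/2:ℝ) * (Sfun x) ^ (1/2:ℝ))) ^ (2:ℝ) :=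
          ENNReal.rpow_le_rpow comb (by norm_num)
      _ = (ENNReal.ofReal (x ^ β)) ^ (2:ℝ) *
            ((∫⁻ y in Ioo x ε, De x y * w y) * Sfun x) := by
          rw [ENNReal.mul_rpow_of_nonneg _ _ (by norm_num : (0:ℝ) ≤ 2),
            ENNReal.mul_rpow_of_nonneg _ _ (by norm_num : (0:ℝ) ≤ 2),
            ← ENNReal.rpow_mul, ← ENNReal.rpow_mul]
          norm_num
      _ ≤ (ENNReal.ofReal (x ^ (2*β)) * Ae) * Sfun x := by
          have e2 : (ENNReal.ofReal (x ^ β)) ^ (2:ℝ) = ENNReal.ofReal (x ^ (2*β)) := by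
            rw [ENNReal.ofReal_rpow_of_nonneg hxβ.le (by norm_num : (0:ℝ) ≤ 2)]
            congr 1
            rw [show (2*β) = β*2 by ring, Real.rpow_mul hx0.le]
          rw [e2]
          calc ENNReal.ofReal (x ^ (2*β)) * ((∫⁻ y in Ioo x ε, De x y * w y) * Sfun x)
              ≤ ENNReal.ofReal (x ^ (2*β)) * (Ae * Sfun x) := by
                apply mul_le_mul_right
                exact mul_le_mul_left step3 _
            _ = (ENNReal.ofReal (x ^ (2*β)) * Ae) * Sfun x := by ring
  -- joint kernel for Tonelli
  set KK : ℝ × ℝ → ℝ≥0∞ := fun p => if p.1 < p.2 then De p.1 p.2 * (w p.2)⁻¹ * q p.2 else 0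
    with hKK
  have hKKmeas : Measurable KK := by
    rw [hKK]
    apply Measurable.ite (measurableSet_lt measurable_fst measurable_snd) _ measurable_const
    apply Measurable.mul
    apply Measurable.mul
    · rw [hDe, hD]
      apply ENNReal.measurable_ofReal.comp
      apply Real.measurable_exp.comp
      apply Measurable.div_const
      apply Measurable.const_mul
      exact ((measurable_fst.pow measurable_const).sub (measurable_snd.pow measurable_const))
    · rw [hw]
      exact (ENNReal.measurable_ofReal.comp (measurable_snd.pow measurable_const)).inv
    · rw [hq]
      exact (hgm.comp measurable_snd).enorm.pow measurable_const
  have hSrep : ∀ x ∈ Ioo (0:ℝ) ε, Sfun x = ∫⁻ y in Ioo (0:ℝ) ε, KK (x, y) := by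
    intro x hx
    have e1 : ∀ y : ℝ, KK (x, y) =
        (Ioi x).indicator (fun y => De x y * (w y)⁻¹ * q y) y := by
      intro y
      rw [hKK, Set.indicator_apply]
      simp only [mem_Ioi]
    have e2 : Ioi x ∩ Ioo (0:ℝ) ε = Ioo x ε := by
      ext z
      simp only [mem_inter_iff, mem_Ioi, mem_Ioo]
      constructor
      · rintro ⟨h1, _, h3⟩; exact ⟨h1, h3⟩
      · rintro ⟨h1, h2⟩; exact ⟨h1, hx.1.trans h1, h2⟩
    calc Sfun x = ∫⁻ y in Ioo x ε, De x y * (w y)⁻¹ * q y := by rw [hSfun]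
      _ = ∫⁻ y in Ioi x ∩ Ioo (0:ℝ) ε, De x y * (w y)⁻¹ * q y := by rw [e2]
      _ = ∫⁻ y in Ioo (0:ℝ) ε, (Ioi x).indicator (fun y => De x y * (w y)⁻¹ * q y) y := by
          rw [← Measure.restrict_restrict measurableSet_Ioi,
            lintegral_indicator measurableSet_Ioi]
      _ = ∫⁻ y in Ioo (0:ℝ) ε, KK (x, y) := by
          apply lintegral_congr
          intro y
          rw [e1 y]
  -- inner column bound for fixed y
  have hinner : ∀ y ∈ Ioo (0:ℝ) ε,
      ∫⁻ x in Ioo (0:ℝ) ε, ENNReal.ofReal (x ^ (2*β)) * KK (x, y) ≤ Be * q y := by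
    intro y hy
    have hy0 : 0 < y := hy.1
    have hyβ : 0 < y ^ β := Real.rpow_pos_of_pos hy0 β
    have hw0 : w y ≠ 0 := by
      rw [hw]
      simp only [ne_eq, ENNReal.ofReal_eq_zero, not_le]
      exact hyβ
    have hwt : w y ≠ ⊤ := ENNReal.ofReal_ne_top
    have hqt : q y ≠ ⊤ := by
      rw [hq]
      exact ENNReal.rpow_ne_top_of_nonneg (by norm_num) ENNReal.coe_ne_top
    have hct : (w y)⁻¹ * q y ≠ ⊤ :=
      ENNReal.mul_ne_top (ENNReal.inv_ne_top.2 hw0) hqt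
    have e1 : ∀ x : ℝ, ENNReal.ofReal (x ^ (2*β)) * KK (x, y) =
        (Iio y).indicator (fun x => ENNReal.ofReal (x ^ (2*β)) * De x y) x
          * ((w y)⁻¹ * q y) := by
      intro x
      rw [hKK, Set.indicator_apply]
      simp only [mem_Iio]
      by_cases hxy : x < y
      · simp only [hxy, if_true]
        ring
      · simp only [hxy, if_false]
        simp
    have e2 : Iio y ∩ Ioo (0:ℝ) ε = Ioo (0:ℝ) y := by
      ext z
      simp only [mem_inter_iff, mem_Iio, mem_Ioo]
      constructor
      · rintro ⟨h1, h2, _⟩; exact ⟨h2, h1⟩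
      · rintro ⟨h1, h2⟩; exact ⟨h2, h1, h2.trans hy.2⟩
    have hcol : ∫⁻ x in Ioo (0:ℝ) y, ENNReal.ofReal (x ^ (2*β)) * De x y ≤ Be * w y := by
      have e3 : ∀ x ∈ Ioo (0:ℝ) y, ENNReal.ofReal (x ^ (2*β)) * De x y =
          ENNReal.ofReal (x ^ (2*β) * D x y) := by
        intro x hx
        rw [hDe, ENNReal.ofReal_mul (Real.rpow_pos_of_pos hx.1 _).le]
      calc ∫⁻ x in Ioo (0:ℝ) y, ENNReal.ofReal (x ^ (2*β)) * De x y
          = ∫⁻ x in Ioo (0:ℝ) y, ENNReal.ofReal (x ^ (2*β) * D x y) := by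
            apply setLIntegral_congr_fun measurableSet_Ioo
            exact e3
        _ ≤ ENNReal.ofReal ((2*C₃*ε^(α+β)/(-s)) * y ^ β) :=
            aux_col α β ε s₀ C₃ s y hα hαβ hε1 hs₀ hC₃1 hC3 hs hy0 hy.2
        _ = Be * w y := by
            rw [hBe, hw, ENNReal.ofReal_mul (by positivity)]
    calc ∫⁻ x in Ioo (0:ℝ) ε, ENNReal.ofReal (x ^ (2*β)) * KK (x, y)
        = (∫⁻ x in Ioo (0:ℝ) ε,
            (Iio y).indicator (fun x => ENNReal.ofReal (x ^ (2*β)) * De x y) x)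
            * ((w y)⁻¹ * q y) := by
          rw [← lintegral_mul_const' _ _ hct]
          apply lintegral_congr
          intro x
          rw [e1 x]
      _ = (∫⁻ x in Ioo (0:ℝ) y, ENNReal.ofReal (x ^ (2*β)) * De x y) * ((w y)⁻¹ * q y) := by
          rw [lintegral_indicator measurableSet_Iio,
            Measure.restrict_restrict measurableSet_Iio, e2]
      _ ≤ (Be * w y) * ((w y)⁻¹ * q y) := mul_le_mul_left hcol _
      _ = Be * (w y * (w y)⁻¹) * q y := by ring
      _ = Be * q y := by rw [ENNReal.mul_inv_cancel hw0 hwt, mul_one]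
  -- Tonelli
  have main_int : ∫⁻ x in Ioo (0:ℝ) ε, ENNReal.ofReal (x ^ (2*β)) * Sfun x ≤ Be * L := by
    have humeas : Measurable (Function.uncurry
        fun x y => ENNReal.ofReal (x ^ (2*β)) * KK (x, y)) := by
      apply Measurable.mul
      · exact ENNReal.measurable_ofReal.comp (measurable_fst.pow measurable_const)
      · exact hKKmeas.comp (measurable_fst.prodMk measurable_snd)
    calc ∫⁻ x in Ioo (0:ℝ) ε, ENNReal.ofReal (x ^ (2*β)) * Sfun x
        = ∫⁻ x in Ioo (0:ℝ) ε, ∫⁻ y in Ioo (0:ℝ) ε,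
            ENNReal.ofReal (x ^ (2*β)) * KK (x, y) := by
          apply lintegral_congr_ae
          refine (ae_restrict_iff' measurableSet_Ioo).2 (Filter.Eventually.of_forall ?_)
          intro x hx
          dsimp only
          rw [hSrep x hx, lintegral_const_mul' _ _ ENNReal.ofReal_ne_top]
      _ = ∫⁻ y in Ioo (0:ℝ) ε, ∫⁻ x in Ioo (0:ℝ) ε,
            ENNReal.ofReal (x ^ (2*β)) * KK (x, y) :=
          lintegral_lintegral_swap humeas.aemeasurable
      _ ≤ ∫⁻ y in Ioo (0:ℝ) ε, Be * q y := by
          apply lintegral_mono_ae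
          refine (ae_restrict_iff' measurableSet_Ioo).2 (Filter.Eventually.of_forall ?_)
          intro y hy
          exact hinner y hy
      _ = Be * L := by
          rw [hL, lintegral_const_mul' _ _ ENNReal.ofReal_ne_top]
  -- total bound on the square integral
  have final : ∫⁻ x in Ioo (0:ℝ) ε, (‖T x‖₊ : ℝ≥0∞) ^ (2:ℝ) ≤ Ae * (Be * L) := by
    calc ∫⁻ x in Ioo (0:ℝ) ε, (‖T x‖₊ : ℝ≥0∞) ^ (2:ℝ)
        ≤ ∫⁻ x in Ioo (0:ℝ) ε, (ENNReal.ofReal (x ^ (2*β)) * Ae) * Sfun x := by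
          apply lintegral_mono_ae
          refine (ae_restrict_iff' measurableSet_Ioo).2 (Filter.Eventually.of_forall ?_)
          intro x hx
          exact hpoint x hx
      _ = Ae * ∫⁻ x in Ioo (0:ℝ) ε, ENNReal.ofReal (x ^ (2*β)) * Sfun x := by
          rw [← lintegral_const_mul' Ae _ ENNReal.ofReal_ne_top]
          apply lintegral_congr
          intro x
          ring
      _ ≤ Ae * (Be * L) := mul_le_mul_right main_int _
  -- constant computation
  have hconst : (Ae * Be) ^ (1/2:ℝ) ≤
      ENNReal.ofReal (Real.sqrt (2*C₃) / |s| * ε ^ (α+β)) := by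
    rw [hAe, hBe, ← ENNReal.ofReal_mul (by positivity),
      ENNReal.ofReal_rpow_of_nonneg (by positivity) (by norm_num)]
    apply ENNReal.ofReal_le_ofReal
    have e1 : ε ^ (α+β) / (-s) * (2*C₃*ε^(α+β)/(-s)) = 2*C₃ * (ε^(α+β)/(-s))^2 := by
      ring
    rw [e1, ← Real.sqrt_eq_rpow, Real.sqrt_mul hC₃0.le, Real.sqrt_sq (by positivity)]
    rw [habs]
    apply le_of_eq
    ring
  -- final assembly
  have hp2 : ((2:ℝ≥0∞)).toReal = (2:ℝ) := by norm_num
  calc eLpNorm T 2 μ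
      = (∫⁻ x in Ioo (0:ℝ) ε, (‖T x‖₊ : ℝ≥0∞) ^ (2:ℝ)) ^ (1/2:ℝ) := by
        rw [hμ, eLpNorm_eq_lintegral_rpow_enorm_toReal two_ne_zero ENNReal.ofNat_ne_top, hp2]
        rfl
    _ ≤ (Ae * (Be * L)) ^ (1/2:ℝ) := ENNReal.rpow_le_rpow final (by norm_num)
    _ = (Ae * Be) ^ (1/2:ℝ) * L ^ (1/2:ℝ) := by
        rw [← mul_assoc, ENNReal.mul_rpow_of_nonneg _ _ (by norm_num : (0:ℝ) ≤ 1/2)]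
    _ ≤ ENNReal.ofReal (Real.sqrt (2*C₃) / |s| * ε ^ (α+β)) * L ^ (1/2:ℝ) :=
        mul_le_mul_left hconst _
    _ = ENNReal.ofReal (Real.sqrt (2*C₃) / |s| * ε ^ (α+β)) * eLpNorm g 2 μ := by
        congr 1
        rw [hμ, eLpNorm_eq_lintegral_rpow_enorm_toReal two_ne_zero ENNReal.ofNat_ne_top, hp2, hL]
        rfl
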